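/- Let V be a 2n-dimensional complex vector space with a non-degenerate symmetric bilinear form g, and let Φ : V → V be an invertible regular linear map (i.e., its minimal polynomial equals its characteristic polynomial) that is self-adjoint with respect to g. Then there exists a maximal isotropic (n-dimensional) subspace W of V with Φ(W) = W if and only if the characteristic polynomial of Φ is the square of some polynomial; moreover, when it exists, such W is unique. -/

import Mathlib

open Module Polynomial

set_option linter.unusedSectionVars false
set_option maxHeartbeats 1000000

namespace Stmt3Aux

variable {V : Type*} [AddCommGroup V] [Module ℂ V] [FiniteDimensional ℂ V]

lemma aeval_restrict_apply (Φ : Module.End ℂ V) {W : Submodule ℂ V}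
    (h : ∀ x ∈ W, Φ x ∈ W) (p : ℂ[X]) (x : W) :
    ((aeval (LinearMap.restrict Φ h) p) x : V) = (aeval Φ p) (x : V) := by
  induction p using Polynomial.induction_on' with
  | add p q hp hq => simp only [map_add, LinearMap.add_apply, Submodule.coe_add, hp, hq]
  | monomial k a =>
      rw [aeval_monomial, aeval_monomial, Module.End.pow_restrict k h]
      simp [Module.algebraMap_end_apply, Module.End.mul_apply, LinearMap.restrict_apply]

lemma aeval_selfadj (g : V →ₗ[ℂ] V →ₗ[ℂ] ℂ) (Φ : Module.End ℂ V)
    (hsa : ∀ u v, g (Φ u) v = g u (Φ v)) (p : ℂ[X]) :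
    ∀ u v, g ((aeval Φ p) u) v = g u ((aeval Φ p) v) := by
  have hpow : ∀ (k : ℕ) (u v : V), g ((Φ ^ k) u) v = g u ((Φ ^ k) v) := by
    intro k
    induction k with
    | zero => simp
    | succ k ih =>
        intro u v
        have hc : Φ ((Φ ^ k) v) = (Φ ^ k) (Φ v) := by
          rw [← Module.End.mul_apply, ← Module.End.mul_apply, pow_mul_comm']
        rw [pow_succ, Module.End.mul_apply, Module.End.mul_apply, ih, hsa, hc]
  induction p using Polynomial.induction_on' with
  | add p q hp hq => intro u v; simp only [map_add, LinearMap.add_apply, hp, hq]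
  | monomial k a =>
      intro u v
      simp only [aeval_monomial, Module.End.mul_apply, Module.algebraMap_end_apply,
        map_smul, LinearMap.smul_apply, smul_eq_mul, hpow]

lemma finrank_ker_aeval_mul_le (Φ : Module.End ℂ V) (p q : ℂ[X]) :
    finrank ℂ (LinearMap.ker (aeval Φ (p * q))) ≤
      finrank ℂ (LinearMap.ker (aeval Φ p)) + finrank ℂ (LinearMap.ker (aeval Φ q)) := by
  set K := LinearMap.ker (aeval Φ (p * q)) with hK
  set h : K →ₗ[ℂ] V := (aeval Φ p).comp K.subtype with hh
  have e1 : finrank ℂ K = finrank ℂ (LinearMap.range h) + finrank ℂ (LinearMap.ker h) :=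
    (LinearMap.finrank_range_add_finrank_ker h).symm
  have e2 : LinearMap.range h ≤ LinearMap.ker (aeval Φ q) := by
    rintro y ⟨x, rfl⟩
    have hx : aeval Φ (p * q) (x : V) = 0 := x.2
    simp only [hh, LinearMap.mem_ker, LinearMap.comp_apply, Submodule.coe_subtype]
    calc (aeval Φ q) ((aeval Φ p) (x : V)) = aeval Φ (q * p) (x : V) := by
          rw [map_mul, Module.End.mul_apply]
      _ = 0 := by rw [mul_comm]; exact hx
  have e3 : finrank ℂ (LinearMap.ker h) ≤ finrank ℂ (LinearMap.ker (aeval Φ p)) := by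
    rw [← Submodule.finrank_map_subtype_eq K (LinearMap.ker h)]
    apply Submodule.finrank_mono
    rintro y ⟨x, hx, rfl⟩
    simpa [hh] using hx
  have := add_le_add (Submodule.finrank_mono e2) e3
  omega

lemma geom_le_one (Φ : Module.End ℂ V)
    (hreg : minpoly ℂ Φ = LinearMap.charpoly Φ) (lam : ℂ) :
    finrank ℂ (LinearMap.ker (aeval Φ (X - C lam))) ≤ 1 := by
  by_contra hcon
  push_neg at hcon
  set μ := minpoly ℂ Φ with hμdef
  have hμmonic : μ.Monic := hreg ▸ LinearMap.charpoly_monic Φ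
  have hμ0 : μ ≠ 0 := hμmonic.ne_zero
  have hdegμ : μ.natDegree = finrank ℂ V := by
    rw [hreg, LinearMap.charpoly_natDegree Φ]
  set T := Φ - algebraMap ℂ (Module.End ℂ V) lam with hT
  have hTa : aeval Φ (X - C lam) = T := by simp [hT, map_sub]
  have hTpow : ∀ j : ℕ, aeval Φ ((X - C lam) ^ j) = T ^ j := fun j => by rw [map_pow, hTa]
  have hroot : μ.IsRoot lam := by
    have hne : LinearMap.ker (aeval Φ (X - C lam)) ≠ ⊥ := by
      intro hbot
      rw [hbot] at hcon
      simp [finrank_bot] at hcon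
    obtain ⟨x, hxmem, hx0⟩ := Submodule.exists_mem_ne_zero_of_ne_bot hne
    have hΦx : Φ x = lam • x := by
      have hx' : (aeval Φ (X - C lam)) x = 0 := hxmem
      rw [hTa] at hx'
      have := sub_eq_zero.1 hx'
      simpa [hT, LinearMap.sub_apply, Module.algebraMap_end_apply, sub_eq_zero] using hx'
    exact Module.End.hasEigenvalue_iff_isRoot.1
      (Module.End.hasEigenvalue_of_hasEigenvector ⟨Module.End.mem_eigenspace_iff.2 hΦx, hx0⟩)
  set m := μ.rootMultiplicity lam with hm
  have hmpos : 0 < m := (rootMultiplicity_pos hμ0).2 hroot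
  set q := μ /ₘ (X - C lam) ^ m with hq
  have hfact : (X - C lam) ^ m * q = μ := pow_mul_divByMonic_rootMultiplicity_eq μ lam
  have hqlam : q.eval lam ≠ 0 := eval_divByMonic_pow_rootMultiplicity_ne_zero lam hμ0
  have hq0 : q ≠ 0 := fun h => hqlam (by simp [h])
  have hXC0 : (X - C lam) ≠ 0 := X_sub_C_ne_zero lam
  have hμdeg2 : μ.natDegree = m + q.natDegree := by
    rw [← hfact, natDegree_mul (pow_ne_zero _ hXC0) hq0, natDegree_pow, natDegree_X_sub_C,
      mul_one]
  have hcop : IsCoprime ((X - C lam) ^ m) q :=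
    (((irreducible_X_sub_C lam).coprime_iff_not_dvd).2 (by
        rw [dvd_iff_isRoot]; exact hqlam)).pow_left
  obtain ⟨u, v, huv⟩ := hcop
  set K₁ := LinearMap.ker (T ^ m) with hK₁
  set K₂ := LinearMap.ker (aeval Φ q) with hK₂
  have hμaeval : aeval Φ μ = 0 := minpoly.aeval ℂ Φ
  have hc1 : ∀ x : V, aeval Φ (v * q) x ∈ K₁ := by
    intro x
    have hp : (X - C lam) ^ m * (v * q) = v * μ := by rw [← hfact]; ring
    have h : (T ^ m) (aeval Φ (v * q) x) = 0 := by
      rw [← hTpow, ← Module.End.mul_apply, ← map_mul, hp, map_mul, Module.End.mul_apply,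
        hμaeval, LinearMap.zero_apply, map_zero]
    exact h
  have hc2 : ∀ x : V, aeval Φ (u * (X - C lam) ^ m) x ∈ K₂ := by
    intro x
    have hp : q * (u * (X - C lam) ^ m) = u * μ := by rw [← hfact]; ring
    have h : (aeval Φ q) (aeval Φ (u * (X - C lam) ^ m) x) = 0 := by
      rw [← Module.End.mul_apply, ← map_mul, hp, map_mul, Module.End.mul_apply,
        hμaeval, LinearMap.zero_apply, map_zero]
    exact h
  have hxdec : ∀ x : V, x = aeval Φ (v * q) x + aeval Φ (u * (X - C lam) ^ m) x := by
    intro x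
    symm
    have h1 : aeval Φ (v * q) x + aeval Φ (u * (X - C lam) ^ m) x
        = aeval Φ (v * q + u * (X - C lam) ^ m) x := by
      rw [map_add, LinearMap.add_apply]
    rw [h1, show v * q + u * (X - C lam) ^ m = 1 by linear_combination huv, map_one,
      Module.End.one_apply]
  have hsup : K₁ ⊔ K₂ = ⊤ := by
    rw [eq_top_iff]
    intro x _
    rw [hxdec x]
    exact Submodule.add_mem_sup (hc1 x) (hc2 x)
  have hinf : K₁ ⊓ K₂ = ⊥ := by
    rw [eq_bot_iff]
    rintro x ⟨h1, h2⟩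
    have h1' : (T ^ m) x = 0 := h1
    have h2' : (aeval Φ q) x = 0 := h2
    have hx := hxdec x
    rw [map_mul, Module.End.mul_apply, h2', map_zero, map_mul, Module.End.mul_apply,
      hTpow, h1', map_zero, add_zero] at hx
    simpa using hx
  have hdim12 : finrank ℂ K₁ + finrank ℂ K₂ = finrank ℂ V := by
    have h := Submodule.finrank_sup_add_finrank_inf_eq K₁ K₂
    rw [hsup, hinf] at h
    simpa [finrank_bot, finrank_top] using h.symm
  -- K₂ lower bound
  have hK₂inv : ∀ x ∈ K₂, Φ x ∈ K₂ := by
    intro x hx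
    have hx' : (aeval Φ q) x = 0 := hx
    have hcomm : aeval Φ q * Φ = Φ * aeval Φ q := by
      have h1 : aeval Φ (q * X) = aeval Φ q * Φ := by rw [map_mul, aeval_X]
      have h2 : aeval Φ (X * q) = Φ * aeval Φ q := by rw [map_mul, aeval_X]
      rw [← h1, ← h2, mul_comm]
    have h : (aeval Φ q) (Φ x) = 0 := by
      rw [← Module.End.mul_apply, hcomm, Module.End.mul_apply, hx', map_zero]
    exact h
  set Φ₂ := LinearMap.restrict Φ hK₂inv with hΦ₂
  have hq₂ann : aeval Φ₂ q = 0 := by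
    ext x
    rw [hΦ₂, aeval_restrict_apply Φ hK₂inv q x]
    simpa using x.2
  set q₂ := minpoly ℂ Φ₂ with hq₂def
  have hq₂dvd : q₂ ∣ q := minpoly.dvd ℂ Φ₂ hq₂ann
  have hq₂0 : q₂ ≠ 0 := minpoly.ne_zero (LinearMap.isIntegral Φ₂)
  have hann : aeval Φ ((X - C lam) ^ m * q₂) = 0 := by
    ext x
    rw [LinearMap.zero_apply]
    have hx := hxdec x
    set a := aeval Φ (v * q) x with ha
    set b := aeval Φ (u * (X - C lam) ^ m) x with hb
    have haK : a ∈ K₁ := hc1 x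
    have hbK : b ∈ K₂ := hc2 x
    rw [hx, map_add]
    have h1 : aeval Φ ((X - C lam) ^ m * q₂) a = 0 := by
      rw [mul_comm, map_mul, Module.End.mul_apply, hTpow, (by exact haK : (T ^ m) a = 0),
        map_zero]
    have h2 : aeval Φ ((X - C lam) ^ m * q₂) b = 0 := by
      rw [map_mul, Module.End.mul_apply]
      have hq₂b : aeval Φ q₂ b = 0 := by
        have h := aeval_restrict_apply Φ hK₂inv q₂ ⟨b, hbK⟩
        rw [minpoly.aeval] at h
        simpa using h.symm
      rw [hq₂b, map_zero]
    rw [h1, h2, add_zero]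
  have hμdvd : μ ∣ (X - C lam) ^ m * q₂ := minpoly.dvd ℂ Φ hann
  have hqq₂ : q ∣ q₂ := by
    rw [← hfact] at hμdvd
    exact (mul_dvd_mul_iff_left (pow_ne_zero m hXC0)).1 hμdvd
  have hdegq : q.natDegree ≤ finrank ℂ K₂ := by
    have h1 : q.natDegree ≤ q₂.natDegree := natDegree_le_of_dvd hqq₂ hq₂0
    have h2 : q₂.natDegree ≤ (LinearMap.charpoly Φ₂).natDegree :=
      natDegree_le_of_dvd (LinearMap.minpoly_dvd_charpoly Φ₂)
        (LinearMap.charpoly_monic Φ₂).ne_zero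
    rw [LinearMap.charpoly_natDegree Φ₂] at h2
    omega
  -- K₁ lower bound : m + 1 ≤ finrank K₁
  have hmono : ∀ i j : ℕ, i ≤ j → LinearMap.ker (T ^ i) ≤ LinearMap.ker (T ^ j) := by
    intro i j hij x hx
    have hx' : (T ^ i) x = 0 := hx
    have h : (T ^ j) x = 0 := by
      rw [show j = (j - i) + i by omega, pow_add, Module.End.mul_apply, hx', map_zero]
    exact h
  have hchain : ∀ j : ℕ, 1 ≤ j → j ≤ m → j + 1 ≤ finrank ℂ (LinearMap.ker (T ^ j)) := by
    intro j
    induction j with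
    | zero => omega
    | succ j ih =>
      intro _ hjm
      by_cases hj0 : j = 0
      · subst hj0
        have h2 : LinearMap.ker (T ^ (0 + 1)) = LinearMap.ker (aeval Φ (X - C lam)) := by
          rw [zero_add, pow_one, hTa]
        rw [h2]
        omega
      · have hj1 : 1 ≤ j := Nat.one_le_iff_ne_zero.2 hj0
        have hle := hmono j (j + 1) (by omega)
        have hne : LinearMap.ker (T ^ j) ≠ LinearMap.ker (T ^ (j + 1)) := by
          intro heq
          have hstab : ∀ k : ℕ, LinearMap.ker (T ^ (j + k)) = LinearMap.ker (T ^ j) := by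
            intro k
            induction k with
            | zero => rfl
            | succ k ihk =>
              apply le_antisymm
              · intro x hx
                have hx' : (T ^ (j + (k + 1))) x = 0 := hx
                have he : (T ^ (j + 1)) ((T ^ k) x) = 0 := by
                  rw [← Module.End.mul_apply, ← pow_add,
                    show j + 1 + k = j + (k + 1) by omega]
                  exact hx'
                have hk' : (T ^ j) ((T ^ k) x) = 0 := by
                  have : (T ^ k) x ∈ LinearMap.ker (T ^ (j + 1)) := he
                  rw [← heq] at this
                  exact this
                have hjk : x ∈ LinearMap.ker (T ^ (j + k)) := by
                  show (T ^ (j + k)) x = 0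
                  rw [pow_add, Module.End.mul_apply]
                  exact hk'
                rw [ihk] at hjk
                exact hjk
              · exact hmono j (j + (k + 1)) (by omega)
          have hmj : LinearMap.ker (T ^ m) = LinearMap.ker (T ^ j) := by
            have h := hstab (m - j)
            rwa [show j + (m - j) = m by omega] at h
          have hann2 : aeval Φ ((X - C lam) ^ j * q) = 0 := by
            ext x
            rw [LinearMap.zero_apply]
            have hx := hxdec x
            set a := aeval Φ (v * q) x with ha
            set b := aeval Φ (u * (X - C lam) ^ m) x with hb
            have haK : a ∈ K₁ := hc1 x
            have hbK : b ∈ K₂ := hc2 x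
            rw [hx, map_add]
            have h1 : aeval Φ ((X - C lam) ^ j * q) a = 0 := by
              have haj : (T ^ j) a = 0 := by
                have : a ∈ LinearMap.ker (T ^ j) := hmj ▸ haK
                exact this
              rw [mul_comm, map_mul, Module.End.mul_apply, hTpow, haj, map_zero]
            have h2 : aeval Φ ((X - C lam) ^ j * q) b = 0 := by
              rw [map_mul, Module.End.mul_apply, (by exact hbK : (aeval Φ q) b = 0), map_zero]
            rw [h1, h2, add_zero]
          have hdvd2 := minpoly.dvd ℂ Φ hann2
          have hne0 : (X - C lam) ^ j * q ≠ 0 := mul_ne_zero (pow_ne_zero _ hXC0) hq0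
          have hdle := natDegree_le_of_dvd hdvd2 hne0
          rw [← hμdef] at hdle
          rw [natDegree_mul (pow_ne_zero _ hXC0) hq0, natDegree_pow, natDegree_X_sub_C,
            mul_one] at hdle
          omega
        have hlt : LinearMap.ker (T ^ j) < LinearMap.ker (T ^ (j + 1)) :=
          lt_of_le_of_ne hle hne
        have hfr := Submodule.finrank_lt_finrank_of_lt hlt
        have hj := ih hj1 (by omega)
        omega
  have hK₁b : m + 1 ≤ finrank ℂ K₁ := by
    rw [hK₁]
    exact hchain m hmpos le_rfl
  omega

lemma ker_aeval_const (Φ : Module.End ℂ V) (β : ℂ[X]) (hβ : β ≠ 0) (h0 : β.natDegree = 0) :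
    LinearMap.ker (aeval Φ β) = ⊥ := by
  have hc : β = C (β.coeff 0) := eq_C_of_natDegree_le_zero (le_of_eq h0)
  have hc0 : β.coeff 0 ≠ 0 := fun h => hβ (by rw [hc, h, map_zero])
  rw [eq_bot_iff]
  intro x hx
  have hx' : (aeval Φ β) x = 0 := hx
  rw [hc, aeval_C, Module.algebraMap_end_apply] at hx'
  have := (smul_eq_zero.1 hx').resolve_left hc0
  simpa using this

lemma finrank_ker_aeval_le (Φ : Module.End ℂ V)
    (hreg : minpoly ℂ Φ = LinearMap.charpoly Φ) (β : ℂ[X]) (hβ : β ≠ 0) :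
    finrank ℂ (LinearMap.ker (aeval Φ β)) ≤ β.natDegree := by
  suffices H : ∀ d : ℕ, ∀ β : ℂ[X], β ≠ 0 → β.natDegree ≤ d →
      finrank ℂ (LinearMap.ker (aeval Φ β)) ≤ β.natDegree from H β.natDegree β hβ le_rfl
  intro d
  induction d with
  | zero =>
    intro β hβ hd
    rw [ker_aeval_const Φ β hβ (Nat.le_zero.1 hd)]
    simp
  | succ d ihd =>
    intro β hβ hd
    by_cases h0 : β.natDegree = 0
    · rw [ker_aeval_const Φ β hβ h0]
      simp
    · have hdegpos : 0 < β.degree := natDegree_pos_iff_degree_pos.1 (Nat.pos_of_ne_zero h0)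
      obtain ⟨lam, hlam⟩ := Complex.exists_root hdegpos
      obtain ⟨β', rfl⟩ := dvd_iff_isRoot.2 hlam
      have hβ'0 : β' ≠ 0 := right_ne_zero_of_mul hβ
      have hdegβ : ((X - C lam) * β').natDegree = β'.natDegree + 1 := by
        rw [natDegree_mul (X_sub_C_ne_zero lam) hβ'0, natDegree_X_sub_C]
        omega
      have h1 := geom_le_one Φ hreg lam
      have h2 := ihd β' hβ'0 (by omega)
      have h3 := finrank_ker_aeval_mul_le Φ (X - C lam) β'
      omega

lemma W_spec (g : V →ₗ[ℂ] V →ₗ[ℂ] ℂ)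
    (hsymm : ∀ u v : V, g u v = g v u)
    (hnd : ∀ u : V, (∀ v : V, g u v = 0) → u = 0)
    (Φ : Module.End ℂ V)
    (hsa : ∀ u v : V, g (Φ u) v = g u (Φ v))
    (hreg : minpoly ℂ Φ = LinearMap.charpoly Φ)
    (n : ℕ) (hdim : finrank ℂ V = 2 * n)
    (W : Submodule ℂ V)
    (hWn : finrank ℂ W = n) (hWiso : ∀ u ∈ W, ∀ v ∈ W, g u v = 0)
    (hWmap : W.map Φ = W) :
    ∃ β : ℂ[X], LinearMap.charpoly Φ = β ^ 2 ∧ β.Monic ∧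
      W = LinearMap.ker (aeval Φ β) := by
  have hmaps : ∀ x ∈ W, Φ x ∈ W := fun x hx => hWmap ▸ Submodule.mem_map_of_mem hx
  set ΦW := LinearMap.restrict Φ hmaps with hΦW
  set β := LinearMap.charpoly ΦW with hβ
  have hβmonic : β.Monic := LinearMap.charpoly_monic ΦW
  have hβdeg : β.natDegree = n := by rw [hβ, LinearMap.charpoly_natDegree ΦW, hWn]
  have hkill : ∀ x ∈ W, aeval Φ β x = 0 := by
    intro x hx
    have h0 : aeval ΦW β = 0 := by rw [hβ]; exact LinearMap.aeval_self_charpoly ΦW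
    have h := aeval_restrict_apply Φ hmaps β ⟨x, hx⟩
    rw [← hΦW, h0] at h
    simpa using h.symm
  have hndB : LinearMap.BilinForm.Nondegenerate g :=
    ⟨hnd, fun y h => hnd y (fun x => by rw [hsymm]; exact h x)⟩
  have hrefl : LinearMap.BilinForm.IsRefl g := fun x y h => by rw [hsymm]; exact h
  have hOle : W ≤ LinearMap.BilinForm.orthogonal g W := by
    intro x hx
    exact fun y hy => hWiso y hy x hx
  have hOrank : finrank ℂ (LinearMap.BilinForm.orthogonal g W) = n := by
    rw [LinearMap.BilinForm.finrank_orthogonal hndB W, hWn, hdim]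
    omega
  have hWO : W = LinearMap.BilinForm.orthogonal g W :=
    Submodule.eq_of_le_of_finrank_le hOle (le_of_eq (hOrank.trans hWn.symm))
  have hrange : ∀ u : V, aeval Φ β u ∈ W := by
    intro u
    rw [hWO]
    intro y hy
    show g y ((aeval Φ β) u) = 0
    calc g y ((aeval Φ β) u) = g ((aeval Φ β) y) u := (aeval_selfadj g Φ hsa β y u).symm
      _ = 0 := by rw [hkill y hy]; simp
  have hsq : aeval Φ (β ^ 2) = 0 := by
    ext x
    rw [pow_two, map_mul, Module.End.mul_apply, LinearMap.zero_apply]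
    exact hkill _ (hrange x)
  have hdvd : LinearMap.charpoly Φ ∣ β ^ 2 := hreg ▸ minpoly.dvd ℂ Φ hsq
  have hchd : (LinearMap.charpoly Φ).natDegree = 2 * n := by
    rw [LinearMap.charpoly_natDegree Φ, hdim]
  have hβ2deg : (β ^ 2).natDegree = 2 * n := by rw [natDegree_pow, hβdeg]
  have hA : LinearMap.charpoly Φ = β ^ 2 :=
    eq_of_dvd_of_natDegree_le_of_leadingCoeff hdvd (by omega)
      (by rw [(LinearMap.charpoly_monic Φ).leadingCoeff, (hβmonic.pow 2).leadingCoeff])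
  have hle : W ≤ LinearMap.ker (aeval Φ β) := fun x hx => hkill x hx
  have hub := finrank_ker_aeval_le Φ hreg β hβmonic.ne_zero
  have hWker : W = LinearMap.ker (aeval Φ β) :=
    Submodule.eq_of_le_of_finrank_le hle (by rw [hWn]; omega)
  exact ⟨β, hA, hβmonic, hWker⟩

end Stmt3Aux


/-- Let `V` be a `2n`-dimensional complex vector space with a non-degenerate symmetric
bilinear form `g`, and let `Φ` be an invertible regular (minimal polynomial equals
characteristic polynomial) endomorphism which is self-adjoint with respect to `g`.
Then there exists a maximal isotropic (`n`-dimensional) subspace `W` with `Φ(W) = W`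
if and only if the characteristic polynomial of `Φ` is a square; moreover such a `W`
is unique when it exists. -/
theorem stmt_3 (n : ℕ) (V : Type*) [AddCommGroup V] [Module ℂ V] [FiniteDimensional ℂ V]
    (hdim : finrank ℂ V = 2 * n)
    (g : V →ₗ[ℂ] V →ₗ[ℂ] ℂ)
    (hsymm : ∀ u v : V, g u v = g v u)
    (hnd : ∀ u : V, (∀ v : V, g u v = 0) → u = 0)
    (Φ : Module.End ℂ V)
    (hinv : Function.Bijective Φ)
    (hsa : ∀ u v : V, g (Φ u) v = g u (Φ v))
    (hreg : minpoly ℂ Φ = LinearMap.charpoly Φ) :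
    ((∃ W : Submodule ℂ V,
        finrank ℂ W = n ∧ (∀ u ∈ W, ∀ v ∈ W, g u v = 0) ∧ W.map Φ = W) ↔
      ∃ β : Polynomial ℂ, LinearMap.charpoly Φ = β ^ 2) ∧
    (∀ W W' : Submodule ℂ V,
      (finrank ℂ W = n ∧ (∀ u ∈ W, ∀ v ∈ W, g u v = 0) ∧ W.map Φ = W) →
      (finrank ℂ W' = n ∧ (∀ u ∈ W', ∀ v ∈ W', g u v = 0) ∧ W'.map Φ = W') →
      W = W') := by
  open Polynomial Stmt3Aux in
  constructor
  · constructor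
    · rintro ⟨W, hWn, hWiso, hWmap⟩
      obtain ⟨β, hA, -, -⟩ := W_spec g hsymm hnd Φ hsa hreg n hdim W hWn hWiso hWmap
      exact ⟨β, hA⟩
    · rintro ⟨β, hA⟩
      set W := LinearMap.ker (aeval Φ β) with hW
      have hchm : (LinearMap.charpoly Φ).Monic := LinearMap.charpoly_monic Φ
      have hβ0 : β ≠ 0 := by
        rintro rfl
        exact hchm.ne_zero (by rw [hA]; ring)
      have hβdeg : β.natDegree = n := by
        have h := congrArg natDegree hA
        rw [LinearMap.charpoly_natDegree Φ, hdim, natDegree_pow] at h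
        omega
      have hub : finrank ℂ W ≤ n := hβdeg ▸ finrank_ker_aeval_le Φ hreg β hβ0
      have hsq : ∀ x : V, (aeval Φ β) ((aeval Φ β) x) = 0 := by
        intro x
        rw [← Module.End.mul_apply, ← map_mul, ← pow_two, ← hA,
          LinearMap.aeval_self_charpoly]
        rfl
      have hrange : LinearMap.range (aeval Φ β) ≤ W := by
        rintro y ⟨x, rfl⟩
        exact hsq x
      have hrk : finrank ℂ (LinearMap.range (aeval Φ β)) + finrank ℂ W = 2 * n := by
        rw [← hdim]
        exact LinearMap.finrank_range_add_finrank_ker _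
      have hlb : n ≤ finrank ℂ W := by
        have := Submodule.finrank_mono hrange
        omega
      have hWn : finrank ℂ W = n := le_antisymm hub hlb
      have hrange_eq : LinearMap.range (aeval Φ β) = W :=
        Submodule.eq_of_le_of_finrank_le hrange (by omega)
      refine ⟨W, hWn, ?_, ?_⟩
      · intro u hu v hv
        rw [← hrange_eq] at hu
        obtain ⟨x, rfl⟩ := hu
        rw [aeval_selfadj g Φ hsa β x v, show (aeval Φ β) v = 0 from hv, map_zero]
      · have hmaple : W.map Φ ≤ W := by
          rintro y ⟨x, hx, rfl⟩
          have hx' : (aeval Φ β) x = 0 := hx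
          show (aeval Φ β) (Φ x) = 0
          have hcomm : aeval Φ β * Φ = Φ * aeval Φ β := by
            have h1 : aeval Φ (β * X) = aeval Φ β * Φ := by rw [map_mul, aeval_X]
            have h2 : aeval Φ (X * β) = Φ * aeval Φ β := by rw [map_mul, aeval_X]
            rw [← h1, ← h2, mul_comm]
          rw [← Module.End.mul_apply, hcomm, Module.End.mul_apply, hx', map_zero]
        have hcoe : ((LinearEquiv.ofBijective Φ hinv : V ≃ₗ[ℂ] V) : V →ₗ[ℂ] V) = Φ := rfl
        have hfr : finrank ℂ (W.map Φ) = finrank ℂ W := by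
          have h := LinearEquiv.finrank_map_eq (LinearEquiv.ofBijective Φ hinv) W
          rwa [hcoe] at h
        exact Submodule.eq_of_le_of_finrank_le hmaple (le_of_eq hfr.symm)
  · rintro W W' ⟨hWn, hWiso, hWmap⟩ ⟨hWn', hWiso', hWmap'⟩
    obtain ⟨β, hA, hM, hK⟩ := W_spec g hsymm hnd Φ hsa hreg n hdim W hWn hWiso hWmap
    obtain ⟨β', hA', hM', hK'⟩ := W_spec g hsymm hnd Φ hsa hreg n hdim W' hWn' hWiso' hWmap'
    have hββ' : β = β' := by
      have hz : (β - β') * (β + β') = 0 := by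
        have h2 : β ^ 2 = β' ^ 2 := by rw [← hA, hA']
        linear_combination h2
      rcases mul_eq_zero.1 hz with h | h
      · exact sub_eq_zero.1 h
      · exfalso
        have hβeq : β = -β' := by linear_combination h
        have h1 : (1 : ℂ) = -1 := by
          have hlc := congrArg Polynomial.leadingCoeff hβeq
          rwa [hM.leadingCoeff, Polynomial.leadingCoeff_neg, hM'.leadingCoeff] at hlc
        norm_num at h1
    rw [hK, hK', hββ']
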